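/- Bitmap-Next exactness of popcount: Let s be a finite set with |s| ≤ b, and let the Bitmap-Next bitmap be constructed by inserting each element at its hash position or the next circularly-available unset position. Then the resulting bitmap has exactly |s| bits set. -/

import Mathlib

open Fin.NatCast in
/-- Insert a bit into the bitmap at position `i`, or at the next (circularly)
unset position after `i` if `i` is already set (Bitmap-Next insertion). -/
def insertNext {b : ℕ} [NeZero b] (bm : Fin b → Bool) (i : Fin b) : Fin b → Bool :=
  match ((List.range b).map (fun k => i + (k : Fin b))).find? (fun j => !bm j) with
  | some j => Function.update bm j true
  | none => bm

/-- The Bitmap-Next bitmap of a list of tokens under hash function `h`. -/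
def bitmapNext {T : Type*} {b : ℕ} [NeZero b] (h : T → Fin b) (s : List T) : Fin b → Bool :=
  s.foldl (fun bm t => insertNext bm (h t)) (fun _ => false)

open Fin.NatCast in
lemma mem_offset_list {b : ℕ} [NeZero b] (i j : Fin b) :
    j ∈ (List.range b).map (fun k => i + (k : Fin b)) := by
  simp only [List.mem_map, List.mem_range, bind_pure_comp, List.map_eq_map]
  exact ⟨j - i, ⟨(j - i).val, (j - i).isLt, Fin.cast_val_eq_self _⟩, by abel⟩

open Fin.NatCast in
lemma insertNext_card {b : ℕ} [NeZero b] (bm : Fin b → Bool) (i : Fin b)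
    (hc : (Finset.univ.filter (fun j : Fin b => bm j = true)).card < b) :
    (Finset.univ.filter (fun j : Fin b => insertNext bm i j = true)).card
      = (Finset.univ.filter (fun j : Fin b => bm j = true)).card + 1 := by
  have hex : ∃ j : Fin b, bm j = false := by
    by_contra hall
    push_neg at hall
    have : (Finset.univ.filter (fun j : Fin b => bm j = true)) = Finset.univ := by
      ext j; simpa using hall j
    rw [this] at hc; simp at hc
  unfold insertNext
  rcases hf : ((List.range b).map (fun k => i + (k : Fin b))).find? (fun j => !bm j) with _ | j
  · exfalso
    obtain ⟨j, hj⟩ := hex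
    have := List.find?_eq_none.mp hf j (mem_offset_list i j)
    simp [hj] at this
  · have hj : bm j = false := by
      have := List.find?_some hf
      simpa using this
    have hset : (Finset.univ.filter (fun x : Fin b => Function.update bm j true x = true))
        = insert j (Finset.univ.filter (fun x : Fin b => bm x = true)) := by
      ext x
      by_cases hx : x = j <;> simp [Function.update, hx]
    rw [hset, Finset.card_insert_of_notMem (by simp [hj])]

lemma foldl_card {T : Type*} {b : ℕ} [NeZero b] (h : T → Fin b) :
    ∀ (s : List T) (bm : Fin b → Bool),
      (Finset.univ.filter (fun j : Fin b => bm j = true)).card + s.length ≤ b →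
      (Finset.univ.filter (fun j : Fin b =>
          (s.foldl (fun bm t => insertNext bm (h t)) bm) j = true)).card
        = (Finset.univ.filter (fun j : Fin b => bm j = true)).card + s.length := by
  intro s
  induction s with
  | nil => intro bm _; rfl
  | cons t s ih =>
    intro bm hle
    rw [List.foldl_cons]
    rw [List.length_cons] at hle ⊢
    have hc : (Finset.univ.filter (fun j : Fin b => bm j = true)).card < b := by omega
    rw [ih _ (by rw [insertNext_card bm (h t) hc]; omega), insertNext_card bm (h t) hc]
    omega

theorem bitmapNext_popcount {T : Type*} {b : ℕ} [NeZero b] (h : T → Fin b)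
    (s : List T) (hnd : s.Nodup) (hlen : s.length ≤ b) :
    (Finset.univ.filter (fun i : Fin b => bitmapNext h s i = true)).card = s.length := by
  have := foldl_card h s (fun _ => false) (by simpa using hlen)
  simp only [Bool.false_eq_true, Finset.filter_false, Finset.card_empty, zero_add] at this
  exact this
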